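/- In a k-truss G, for every vertex v, the number of triangles of G containing v is at least binomial(k+1, 2). -/

import Mathlib

/-- A graph is a `k`-truss if it has no isolated vertices and every edge is
contained in at least `k` triangles. -/
def SimpleGraph.IsTruss {V : Type*} (G : SimpleGraph V) (k : ℕ) : Prop :=
  (∀ v : V, ∃ u : V, G.Adj v u) ∧
  ∀ ⦃u v : V⦄, G.Adj u v → k ≤ {w : V | G.Adj u w ∧ G.Adj v w}.ncard

theorem truss_min_triangles_through_vertex {V : Type*} [Fintype V]
    (G : SimpleGraph V) (k : ℕ) (h : G.IsTruss k) (v : V) :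
    (k + 1).choose 2 ≤ {t : Finset V | G.IsNClique 3 t ∧ v ∈ t}.ncard := by
  classical
  set s := G.neighborSet v with hs
  let G' : SimpleGraph ↥s := G.induce s
  -- every vertex of G' has degree ≥ k
  have hdeg : ∀ w : ↥s, k ≤ G'.degree w := by
    intro w
    have hvw : G.Adj v ↑w := w.2
    have h1 : k ≤ {x : V | G.Adj v x ∧ G.Adj ↑w x}.ncard := h.2 hvw
    have himg : {x : V | G.Adj v x ∧ G.Adj ↑w x} = Subtype.val '' (G'.neighborSet w) := by
      ext x
      simp only [Set.mem_setOf_eq, Set.mem_image, SimpleGraph.mem_neighborSet]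
      constructor
      · rintro ⟨hvx, hwx⟩; exact ⟨⟨x, hvx⟩, hwx, rfl⟩
      · rintro ⟨y, hy, rfl⟩; exact ⟨y.2, hy⟩
    rw [himg, Set.ncard_image_of_injective _ Subtype.val_injective,
      Set.ncard_eq_toFinset_card', Set.toFinset_card] at h1
    rwa [← SimpleGraph.card_neighborSet_eq_degree]
  -- s has at least k+1 elements
  have hcard : k + 1 ≤ Fintype.card ↥s := by
    obtain ⟨u, hu⟩ := h.1 v
    have h1 : k ≤ {w : V | G.Adj v w ∧ G.Adj u w}.ncard := h.2 hu
    have hsub : insert u {w : V | G.Adj v w ∧ G.Adj u w} ⊆ s := by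
      rintro x (rfl | ⟨hx, -⟩)
      · exact hu
      · exact hx
    have hufree : u ∉ {w : V | G.Adj v w ∧ G.Adj u w} := fun hc => G.loopless.irrefl u hc.2
    calc k + 1 ≤ {w : V | G.Adj v w ∧ G.Adj u w}.ncard + 1 := by omega
      _ = (insert u {w : V | G.Adj v w ∧ G.Adj u w}).ncard :=
        (Set.ncard_insert_of_notMem hufree (Set.toFinite _)).symm
      _ ≤ s.ncard := Set.ncard_le_ncard hsub (Set.toFinite _)
      _ = Fintype.card ↥s := by rw [← Nat.card_coe_set_eq, Nat.card_eq_fintype_card]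
  -- degree sum
  have hsum : (k + 1) * k ≤ 2 * G'.edgeFinset.card := by
    calc (k + 1) * k ≤ Fintype.card ↥s * k := Nat.mul_le_mul_right k hcard
      _ = ∑ _w : ↥s, k := by rw [Finset.sum_const, Finset.card_univ, smul_eq_mul]
      _ ≤ ∑ w : ↥s, G'.degree w := Finset.sum_le_sum fun w _ => hdeg w
      _ = 2 * G'.edgeFinset.card := G'.sum_degrees_eq_twice_card_edges
  -- injection from edges of G' to triangles through v
  have hinj : G'.edgeFinset.card ≤ {t : Finset V | G.IsNClique 3 t ∧ v ∈ t}.ncard := by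
    rw [Set.ncard_eq_toFinset_card']
    let fp : {f : ↥s → ↥s → Finset V // ∀ a b, f a b = f b a} :=
      ⟨fun a b => {(a : V), (b : V)}, fun a b => Finset.pair_comm _ _⟩
    refine Finset.card_le_card_of_injOn (fun e => insert v (Sym2.lift fp e)) ?_ ?_
    · intro e he
      induction e using Sym2.ind with
      | _ a b =>
        rw [Finset.mem_coe, SimpleGraph.mem_edgeFinset, SimpleGraph.mem_edgeSet] at he
        have hab : G.Adj ↑a ↑b := he
        have hva : G.Adj v ↑a := a.2
        have hvb : G.Adj v ↑b := b.2
        simp only [Sym2.lift_mk, Finset.mem_coe, Set.mem_toFinset, Set.mem_setOf_eq]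
        change G.IsNClique 3 (insert v ({(a : V), (b : V)} : Finset V)) ∧ v ∈ insert v ({(a : V), (b : V)} : Finset V)
        refine ⟨⟨?_, ?_⟩, Finset.mem_insert_self v _⟩
        · intro x hx y hy hxy
          simp only [Finset.coe_insert, Set.mem_insert_iff, Finset.coe_singleton, Set.mem_singleton_iff] at hx hy
          rcases hx with rfl | rfl | rfl <;> rcases hy with rfl | rfl | rfl <;>
            first
            | exact absurd rfl hxy
            | assumption
            | exact hva.symm
            | exact hvb.symm
            | exact hab.symm
        · rw [Finset.card_insert_of_notMem, Finset.card_pair hab.ne]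
          simp only [Finset.mem_insert, Finset.mem_singleton]
          push_neg
          exact ⟨hva.ne, hvb.ne⟩
    · intro e he e' he' hf
      simp only [Finset.mem_coe, SimpleGraph.mem_edgeFinset, SimpleGraph.mem_edgeSet] at he he'
      revert he he' hf
      induction e using Sym2.ind with
      | _ a b =>
        induction e' using Sym2.ind with
        | _ c d =>
          intro hf he he'
          have hf : insert v ({(a : V), (b : V)} : Finset V) = insert v {(c : V), (d : V)} := hf
          have hva : G.Adj v ↑a := a.2
          have hvb : G.Adj v ↑b := b.2
          have hvc : G.Adj v ↑c := c.2
          have hvd : G.Adj v ↑d := d.2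
          have hvnab : v ∉ ({↑a, ↑b} : Finset V) := by
            simp only [Finset.mem_insert, Finset.mem_singleton]
            push_neg; exact ⟨hva.ne, hvb.ne⟩
          have hvncd : v ∉ ({↑c, ↑d} : Finset V) := by
            simp only [Finset.mem_insert, Finset.mem_singleton]
            push_neg; exact ⟨hvc.ne, hvd.ne⟩
          have hpair : ({↑a, ↑b} : Finset V) = {↑c, ↑d} := by
            have := congrArg (fun t => Finset.erase t v) hf
            simpa [Finset.erase_insert hvnab, Finset.erase_insert hvncd] using this
          have h1 : (a : V) = c ∨ (a : V) = d := by
            have : (a : V) ∈ ({↑c, ↑d} : Finset V) := hpair ▸ (by simp)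
            simpa using this
          have h2 : (b : V) = c ∨ (b : V) = d := by
            have : (b : V) ∈ ({↑c, ↑d} : Finset V) := hpair ▸ (by simp)
            simpa using this
          have hab : (a : V) ≠ b := he.ne
          rcases h1 with h1 | h1 <;> rcases h2 with h2 | h2
          · exact absurd (h1.trans h2.symm) hab
          · rw [Sym2.eq_iff]; exact Or.inl ⟨Subtype.ext h1, Subtype.ext h2⟩
          · rw [Sym2.eq_iff]; exact Or.inr ⟨Subtype.ext h1, Subtype.ext h2⟩
          · exact absurd (h1.trans h2.symm) hab
  have h2 : 2 * (k + 1).choose 2 = (k + 1) * k := by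
    have hdvd : 2 ∣ (k + 1) * k := by
      rw [Nat.mul_comm]; exact (Nat.even_mul_succ_self k).two_dvd
    rw [Nat.choose_two_right, Nat.add_sub_cancel, Nat.mul_div_cancel' hdvd]
  omega
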